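/- The derivative at q = 0 of the expected nondisclosure price against the prior signal distribution vanishes: (d/dq)|_{q=0} ∫ P^q(s, v̂) g(s) ds = 0, because ∫(s(1-p·1_{s>v̂}) - (1-p)μ - p∫_{v_min}^{v̂} t g(t)dt) g(s)ds = 0 and ∫(1-p·1_{s>v̂} - (1-p+pG(v̂))) g(s)ds = 0. -/

import Mathlib

open intervalIntegral MeasureTheory

lemma split_ite_integral {a b c : ℝ} (hab : a ≤ b) (hbc : b ≤ c)
    (f₀ f₁ : ℝ → ℝ)
    (h₀ : IntervalIntegrable f₀ volume a b)
    (h₁ : IntervalIntegrable f₁ volume b c) :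
    (∫ s in a..c, (if b < s then f₁ s else f₀ s))
      = (∫ s in a..b, f₀ s) + ∫ s in b..c, f₁ s := by
  have i0 : IntervalIntegrable (fun s => if b < s then f₁ s else f₀ s) volume a b := by
    rw [intervalIntegrable_iff_integrableOn_Ioc_of_le hab] at h₀ ⊢
    exact h₀.congr_fun (fun x hx => by simp [not_lt.mpr hx.2]) measurableSet_Ioc
  have i1 : IntervalIntegrable (fun s => if b < s then f₁ s else f₀ s) volume b c := by
    rw [intervalIntegrable_iff_integrableOn_Ioc_of_le hbc] at h₁ ⊢
    exact h₁.congr_fun (fun x hx => by simp [hx.1]) measurableSet_Ioc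
  have e0 : (∫ s in a..b, (if b < s then f₁ s else f₀ s)) = ∫ s in a..b, f₀ s := by
    rw [integral_of_le hab, integral_of_le hab]
    exact setIntegral_congr_fun measurableSet_Ioc (fun x hx => by simp [not_lt.mpr hx.2])
  have e1 : (∫ s in b..c, (if b < s then f₁ s else f₀ s)) = ∫ s in b..c, f₁ s := by
    rw [integral_of_le hbc, integral_of_le hbc]
    exact setIntegral_congr_fun measurableSet_Ioc (fun x hx => by simp [hx.1])
  rw [← integral_add_adjacent_intervals i0 i1, e0, e1]

lemma lin_int {a b : ℝ} (c d : ℝ) (g : ℝ → ℝ)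
    (h1 : IntervalIntegrable (fun s => s * g s) volume a b)
    (h2 : IntervalIntegrable g volume a b) :
    (∫ s in a..b, (c * s + d) * g s)
      = c * (∫ s in a..b, s * g s) + d * ∫ s in a..b, g s := by
  rw [← intervalIntegral.integral_const_mul, ← intervalIntegral.integral_const_mul,
    ← integral_add (h1.const_mul c) (h2.const_mul d)]
  apply integral_congr
  intro x _
  ring

lemma hasDerivAt_frac (a b c d : ℝ) (hd : d ≠ 0) :
    HasDerivAt (fun q : ℝ => (q * a + (1 - q) * c) / (q * b + (1 - q) * d))
      (((a - c) * d - c * (b - d)) / d ^ 2) 0 := by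
  have hnum : HasDerivAt (fun q : ℝ => q * a + (1 - q) * c) (a - c) 0 := by
    have := ((hasDerivAt_id (0 : ℝ)).mul_const a).add
      (((hasDerivAt_const (0 : ℝ) (1 : ℝ)).sub (hasDerivAt_id 0)).mul_const c)
    exact this.congr_deriv (by simp; ring)
  have hden : HasDerivAt (fun q : ℝ => q * b + (1 - q) * d) (b - d) 0 := by
    have := ((hasDerivAt_id (0 : ℝ)).mul_const b).add
      (((hasDerivAt_const (0 : ℝ) (1 : ℝ)).sub (hasDerivAt_id 0)).mul_const d)
    exact this.congr_deriv (by simp; ring)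
  have h := hnum.div hden (by simpa using hd)
  exact h.congr_deriv (by simp)

/-- the derivative at q = 0 of the expected nondisclosure price
∫ P^q(s, v̂) g(s) ds vanishes, because the two auxiliary integrals vanish. -/
theorem expected_price_derivative_at_zero
    (vmin vmax : ℝ) (hv : vmin < vmax)
    (p : ℝ) (hp : p ∈ Set.Ioo (0:ℝ) 1)
    (g : ℝ → ℝ)
    (hg_cont : ContinuousOn g (Set.Icc vmin vmax))
    (hg_pos : ∀ x ∈ Set.Icc vmin vmax, 0 < g x)
    (hg_density : ∫ t in vmin..vmax, g t = 1)
    (G : ℝ → ℝ) (hG : ∀ v, G v = ∫ t in vmin..v, g t)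
    (μ : ℝ) (hμ : μ = ∫ t in vmin..vmax, t * g t)
    (vhat : ℝ) (hvhat : vhat ∈ Set.Ioo vmin vmax)
    (K D : ℝ)
    (hK : K = (1 - p) * μ + p * ∫ t in vmin..vhat, t * g t)
    (hD : D = 1 - p + p * G vhat) :
    (∫ s in vmin..vmax,
        (s * (1 - p * (if vhat < s then 1 else 0)) - K) * g s) = 0 ∧
    (∫ s in vmin..vmax,
        ((1 - p * (if vhat < s then 1 else 0)) - D) * g s) = 0 ∧
    HasDerivAt
      (fun q : ℝ => ∫ s in vmin..vmax,
        ((q * s * (1 - p * (if vhat < s then 1 else 0)) + (1 - q) * K) /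
          (q * (1 - p * (if vhat < s then 1 else 0)) + (1 - q) * D)) * g s)
      0 0 := by
  obtain ⟨hp0, hp1⟩ := hp
  obtain ⟨hv1, hv2⟩ := hvhat
  have hle1 : vmin ≤ vhat := hv1.le
  have hle2 : vhat ≤ vmax := hv2.le
  have hIcc1 : Set.uIcc vmin vhat ⊆ Set.Icc vmin vmax := by
    rw [Set.uIcc_of_le hle1]; exact Set.Icc_subset_Icc le_rfl hle2
  have hIcc2 : Set.uIcc vhat vmax ⊆ Set.Icc vmin vmax := by
    rw [Set.uIcc_of_le hle2]; exact Set.Icc_subset_Icc hle1 le_rfl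
  -- basic integrability
  have hg1 : IntervalIntegrable g volume vmin vhat :=
    (hg_cont.mono hIcc1).intervalIntegrable
  have hg2 : IntervalIntegrable g volume vhat vmax :=
    (hg_cont.mono hIcc2).intervalIntegrable
  have hsg1 : IntervalIntegrable (fun s => s * g s) volume vmin vhat :=
    (continuous_id.continuousOn.mul (hg_cont.mono hIcc1)).intervalIntegrable
  have hsg2 : IntervalIntegrable (fun s => s * g s) volume vhat vmax :=
    (continuous_id.continuousOn.mul (hg_cont.mono hIcc2)).intervalIntegrable
  have haff1 : ∀ c d : ℝ, IntervalIntegrable (fun s => (c * s + d) * g s) volume vmin vhat :=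
    fun c d => (((continuous_const.mul continuous_id).add continuous_const).continuousOn.mul
      (hg_cont.mono hIcc1)).intervalIntegrable
  have haff2 : ∀ c d : ℝ, IntervalIntegrable (fun s => (c * s + d) * g s) volume vhat vmax :=
    fun c d => (((continuous_const.mul continuous_id).add continuous_const).continuousOn.mul
      (hg_cont.mono hIcc2)).intervalIntegrable
  -- key quantities
  set A1 : ℝ := ∫ s in vmin..vhat, s * g s with hA1
  set A2 : ℝ := ∫ s in vhat..vmax, s * g s with hA2
  set B1 : ℝ := ∫ s in vmin..vhat, g s with hB1
  set B2 : ℝ := ∫ s in vhat..vmax, g s with hB2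
  have hAsum : A1 + A2 = μ := by
    rw [hμ, ← integral_add_adjacent_intervals hsg1 hsg2]
  have hBsum : B1 + B2 = 1 := by
    rw [← hg_density, ← integral_add_adjacent_intervals hg1 hg2]
  have hKeq : K = A1 + (1 - p) * A2 := by
    rw [hK]; linear_combination (1 - p) * hAsum.symm
  have hDeq : D = B1 + (1 - p) * B2 := by
    rw [hD, hG vhat, ← hB1]; linear_combination (p - 1) * hBsum
  have hB1nn : 0 ≤ B1 := by
    rw [hB1, integral_of_le hle1]
    apply setIntegral_nonneg measurableSet_Ioc
    intro x hx
    exact (hg_pos x ⟨hx.1.le, hx.2.trans hle2⟩).le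
  have hDpos : (0:ℝ) < D := by
    rw [hD]
    have : 0 ≤ p * G vhat := by
      rw [hG vhat, ← hB1]; positivity
    linarith
  have hDne : D ≠ 0 := hDpos.ne'
  refine ⟨?_, ?_, ?_⟩
  · -- first integral vanishes
    have hrw : (∫ s in vmin..vmax, (s * (1 - p * (if vhat < s then 1 else 0)) - K) * g s)
        = ∫ s in vmin..vmax,
            (if vhat < s then ((1 - p) * s + (-K)) * g s else (1 * s + (-K)) * g s) := by
      apply integral_congr
      intro x _
      by_cases h : vhat < x
      · simp only [if_pos h]; ring
      · simp only [if_neg h]; ring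
    rw [hrw, split_ite_integral hle1 hle2 _ _ (haff1 1 (-K)) (haff2 (1 - p) (-K)),
      lin_int 1 (-K) g hsg1 hg1, lin_int (1 - p) (-K) g hsg2 hg2]
    rw [← hA1, ← hA2, ← hB1, ← hB2]
    linear_combination -hKeq - K * hBsum
  · -- second integral vanishes
    have hrw : (∫ s in vmin..vmax, ((1 - p * (if vhat < s then 1 else 0)) - D) * g s)
        = ∫ s in vmin..vmax,
            (if vhat < s then (0 * s + (1 - p - D)) * g s else (0 * s + (1 - D)) * g s) := by
      apply integral_congr
      intro x _
      by_cases h : vhat < x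
      · simp only [if_pos h]; ring
      · simp only [if_neg h]; ring
    rw [hrw, split_ite_integral hle1 hle2 _ _ (haff1 0 (1 - D)) (haff2 0 (1 - p - D)),
      lin_int 0 (1 - D) g hsg1 hg1, lin_int 0 (1 - p - D) g hsg2 hg2]
    rw [← hA1, ← hA2, ← hB1, ← hB2]
    linear_combination -hDeq - D * hBsum
  · -- derivative at zero
    have hfeq : (fun q : ℝ => ∫ s in vmin..vmax,
        ((q * s * (1 - p * (if vhat < s then 1 else 0)) + (1 - q) * K) /
          (q * (1 - p * (if vhat < s then 1 else 0)) + (1 - q) * D)) * g s)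
        = fun q : ℝ =>
          (q * A1 + (1 - q) * (K * B1)) / (q * 1 + (1 - q) * D)
          + (q * ((1 - p) * A2) + (1 - q) * (K * B2)) / (q * (1 - p) + (1 - q) * D) := by
      funext q
      have hrw : (∫ s in vmin..vmax,
          ((q * s * (1 - p * (if vhat < s then 1 else 0)) + (1 - q) * K) /
            (q * (1 - p * (if vhat < s then 1 else 0)) + (1 - q) * D)) * g s)
          = ∫ s in vmin..vmax,
              (if vhat < s then
                ((q * (1 - p) / (q * (1 - p) + (1 - q) * D)) * s
                  + (1 - q) * K / (q * (1 - p) + (1 - q) * D)) * g s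
              else
                ((q / (q * 1 + (1 - q) * D)) * s
                  + (1 - q) * K / (q * 1 + (1 - q) * D)) * g s) := by
        apply integral_congr
        intro x _
        by_cases h : vhat < x
        · simp only [if_pos h]; ring
        · simp only [if_neg h]; ring
      rw [hrw, split_ite_integral hle1 hle2 _ _ (haff1 _ _) (haff2 _ _),
        lin_int _ _ g hsg1 hg1, lin_int _ _ g hsg2 hg2]
      rw [← hA1, ← hA2, ← hB1, ← hB2]
      ring
    rw [hfeq]
    have h1 := hasDerivAt_frac A1 1 (K * B1) D hDne
    have h2 := hasDerivAt_frac ((1 - p) * A2) (1 - p) (K * B2) D hDne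
    have h := h1.add h2
    refine h.congr_deriv (Eq.symm ?_)
    have hD2 : D ^ 2 ≠ 0 := pow_ne_zero 2 hDne
    field_simp
    linear_combination D * hKeq - K * hDeq
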